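/- Let n ≥ 2 and let f be a fixed-point-free involution on ZMod (2n) such that f a = b + 1 and f (a+1) = b, where a, a+1, b, b+1 are four pairwise distinct points. Then every chord d distinct from c₁ = {a, b+1} and c₂ = {a+1, b} is linked with c₁ if and only if it is linked with c₂; consequently c₁ and c₂ have the same Gaussian parity. (This verifies parity axiom 2 for the Gaussian parity: the two crossings involved in a second Reidemeister move have the same parity.) -/

import Mathlib

lemma ZM.natCast_val_self {N : ℕ} [NeZero N] (z : ZMod N) : ((z.val : ℕ) : ZMod N) = z := by
  simp [ZMod.natCast_val, ZMod.cast_id]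

lemma ZM.vinj {N : ℕ} [NeZero N] {z z' : ZMod N} (h : z.val = z'.val) : z = z' := by
  rw [← ZM.natCast_val_self z, ← ZM.natCast_val_self z', h]

lemma ZM.cast_pred {N : ℕ} (h1 : 1 ≤ N) : ((N - 1 : ℕ) : ZMod N) = -1 := by
  rw [Nat.cast_sub h1, Nat.cast_one, ZMod.natCast_self]; ring

lemma ZM.val_neg_one {N : ℕ} [NeZero N] (h1 : 1 < N) : (-1 : ZMod N).val = N - 1 := by
  rw [← ZM.cast_pred (by omega), ZMod.val_cast_of_lt (by omega)]

lemma ZM.val_add_one {N : ℕ} [NeZero N] (h1 : 1 < N) {z : ZMod N} (hz : z ≠ -1) :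
    (z + 1).val = z.val + 1 := by
  haveI : Fact (1 < N) := ⟨h1⟩
  rw [ZMod.val_add, ZMod.val_one]
  apply Nat.mod_eq_of_lt
  have hlt := ZMod.val_lt z
  rcases Nat.lt_or_ge (z.val + 1) N with h | h
  · exact h
  · exfalso
    apply hz
    have hv : z.val = N - 1 := by omega
    rw [← ZM.natCast_val_self z, hv, ZM.cast_pred (by omega)]

lemma ZM.val_sub_one {N : ℕ} [NeZero N] (h1 : 1 < N) {z : ZMod N} (hz : z ≠ 0) :
    (z - 1).val = z.val - 1 := by
  have h : (z - 1 + 1).val = (z - 1).val + 1 := by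
    apply ZM.val_add_one h1
    intro h; apply hz; linear_combination h
  rw [sub_add_cancel] at h
  omega



/-- The open arc from `u` to `v` on the cyclic set `ZMod N`: the points
`u+1, u+2, …, v-1` reached from `u` by repeatedly adding `1` before reaching `v`. -/
def openArc {N : ℕ} (u v : ZMod N) : Set (ZMod N) :=
  {w | 0 < (w - u).val ∧ (w - u).val < (v - u).val}

/-- For a chord diagram given by the fixed-point-free involution `f`, the chord
`{b, f b}` is linked with the chord `{a, f a}` if exactly one of `b`, `f b`
lies in the open arc from `a` to `f a`. -/
def Linked {N : ℕ} (f : ZMod N → ZMod N) (a b : ZMod N) : Prop :=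
  Xor' (b ∈ openArc a (f a)) (f b ∈ openArc a (f a))

/-- The number of chords of the chord diagram `f` linked with the chord `{a, f a}`. -/
noncomputable def linkedCount {N : ℕ} (f : ZMod N → ZMod N) (a : ZMod N) : ℕ :=
  Set.ncard {d : Set (ZMod N) | ∃ b, d = {b, f b} ∧ Linked f a b}

/-- The chord `{a, f a}` is Gaussian-even: the number of chords linked with it is even. -/
def GaussEven {N : ℕ} (f : ZMod N → ZMod N) (a : ZMod N) : Prop :=
  Even (linkedCount f a)

/-- For two parallel chords `c₁ = {a, b+1}`, `c₂ = {a+1, b}` (the two crossings involved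
in a second Reidemeister move), every other chord is linked with `c₁` iff it is linked
with `c₂`; consequently `c₁` and `c₂` have the same Gaussian parity. -/
theorem second_reidemeister_same_parity (n : ℕ) (hn : 2 ≤ n)
    (f : ZMod (2 * n) → ZMod (2 * n))
    (hinv : Function.Involutive f) (hfpf : ∀ x, f x ≠ x)
    (a b : ZMod (2 * n)) (h1 : f a = b + 1) (h2 : f (a + 1) = b)
    (hdist : [a, a + 1, b, b + 1].Pairwise (· ≠ ·)) :
    (∀ x, ({x, f x} : Set (ZMod (2 * n))) ≠ {a, b + 1} →
        ({x, f x} : Set (ZMod (2 * n))) ≠ {a + 1, b} →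
        (Linked f a x ↔ Linked f (a + 1) x)) ∧
    (GaussEven f a ↔ GaussEven f (a + 1)) := by
  haveI : NeZero (2 * n) := ⟨by omega⟩
  haveI : Fact (1 < 2 * n) := ⟨by omega⟩
  have hN : 4 ≤ 2 * n := by omega
  simp only [List.pairwise_cons, List.mem_cons, List.mem_singleton,
    forall_eq_or_imp, forall_eq, List.Pairwise.nil, and_true] at hdist
  obtain ⟨⟨haa1, hab, hab1, -⟩, ⟨ha1b, ha1b1, -⟩, ⟨hbb1, -⟩, -⟩ := hdist
  have hfb : f b = a + 1 := by have := hinv (a + 1); rw [h2] at this; exact this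
  have hfb1 : f (b + 1) = a := by have := hinv a; rw [h1] at this; exact this
  set q := (b - a).val with hq
  have hba0 : b - a ≠ 0 := sub_ne_zero.2 (Ne.symm hab)
  have hq0 : 0 < q := by
    rcases Nat.eq_zero_or_pos q with h | h
    · exact absurd (ZMod.val_eq_zero (b - a) |>.1 h) hba0
    · exact h
  have hqlt : q < 2 * n := ZMod.val_lt _
  have hbaneg : b - a ≠ -1 := fun h => hab1 (by linear_combination -h)
  have hqN : q < 2 * n - 1 := by
    have hne : q ≠ 2 * n - 1 := by
      intro h
      exact hbaneg (ZM.vinj (by rw [← hq, h, ZM.val_neg_one (by omega)]))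
    omega
  have hq1 : q ≠ 1 := by
    intro h
    have : b - a = 1 := ZM.vinj (by rw [← hq, h, ZMod.val_one])
    exact ha1b (by linear_combination -this)
  have hvb1 : (b + 1 - a).val = q + 1 := by
    have e : b + 1 - a = (b - a) + 1 := by ring
    rw [e, ZM.val_add_one (by omega) hbaneg]
  have hvb2 : (b - (a + 1)).val = q - 1 := by
    have e : b - (a + 1) = (b - a) - 1 := by ring
    rw [e, ZM.val_sub_one (by omega) hba0]
  have hv1 : (a + 1 - a).val = 1 := by
    have e : a + 1 - a = 1 := by ring
    rw [e, ZMod.val_one]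
  have hvm1 : (a - (a + 1)).val = 2 * n - 1 := by
    have e : a - (a + 1) = -1 := by ring
    rw [e, ZM.val_neg_one (by omega)]
  have m1b : (a + 1 - (a + 1)).val = 0 := by simp
  have ma : (a - a).val = 0 := by simp
  have mb1b : (b + 1 - (a + 1)).val = q := by
    have e : b + 1 - (a + 1) = b - a := by ring
    rw [e]
  have memA : ∀ w : ZMod (2 * n), w ∈ openArc a (b + 1) ↔
      (0 < (w - a).val ∧ (w - a).val < q + 1) := by
    intro w
    simp only [openArc, Set.mem_setOf_eq, hvb1]
  have memB : ∀ w : ZMod (2 * n), w ∈ openArc (a + 1) b ↔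
      (0 < (w - (a + 1)).val ∧ (w - (a + 1)).val < q - 1) := by
    intro w
    simp only [openArc, Set.mem_setOf_eq, hvb2]
  have key : ∀ w : ZMod (2 * n), w ≠ a → w ≠ a + 1 → w ≠ b → w ≠ b + 1 →
      (w ∈ openArc a (f a) ↔ w ∈ openArc (a + 1) (f (a + 1))) := by
    intro w hw1 hw2 hw3 hw4
    rw [h1, h2, memA, memB]
    have hwa0 : w - a ≠ 0 := sub_ne_zero.2 hw1
    have hp0 : (w - a).val ≠ 0 := fun h => hwa0 ((ZMod.val_eq_zero _).1 h)
    have hp1 : (w - a).val ≠ 1 := by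
      intro h
      have : w - a = a + 1 - a := ZM.vinj (by rw [h, hv1])
      exact hw2 (by linear_combination this)
    have hpq : (w - a).val ≠ q := by
      intro h
      have : w - a = b - a := ZM.vinj (by rw [h])
      exact hw3 (by linear_combination this)
    have hpq1 : (w - a).val ≠ q + 1 := by
      intro h
      have : w - a = b + 1 - a := ZM.vinj (by rw [h, hvb1])
      exact hw4 (by linear_combination this)
    have hsub : (w - (a + 1)).val = (w - a).val - 1 := by
      have e : w - (a + 1) = (w - a) - 1 := by ring
      rw [e, ZM.val_sub_one (by omega) hwa0]
    rw [hsub]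
    omega
  have none : ∀ y : ZMod (2 * n), y = a ∨ y = a + 1 ∨ y = b ∨ y = b + 1 →
      ¬Linked f a y ∧ ¬Linked f (a + 1) y := by
    intro y hy
    rcases hy with rfl | rfl | rfl | rfl <;>
      constructor <;>
        · simp only [Linked, h1, h2, hfb, hfb1, memA, memB, Xor', Xor, ma, hvm1, hv1, m1b, hvb2,
            hvb1, mb1b, ← hq]
          omega
  have core : ∀ x : ZMod (2 * n), x ≠ a → x ≠ a + 1 → x ≠ b → x ≠ b + 1 →
      (Linked f a x ↔ Linked f (a + 1) x) := by
    intro x hx1 hx2 hx3 hx4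
    have hf1 : f x ≠ a := fun h => hx4 (hinv.injective (by rw [h, hfb1]))
    have hf2 : f x ≠ a + 1 := fun h => hx3 (hinv.injective (by rw [h, hfb]))
    have hf3 : f x ≠ b := fun h => hx2 (hinv.injective (by rw [h, h2]))
    have hf4 : f x ≠ b + 1 := fun h => hx1 (hinv.injective (by rw [h, h1]))
    unfold Linked
    rw [key x hx1 hx2 hx3 hx4, key (f x) hf1 hf2 hf3 hf4]
  constructor
  · intro x hc1 hc2
    have hx1 : x ≠ a := fun h => hc1 (by rw [h, h1])
    have hx2 : x ≠ a + 1 := fun h => hc2 (by rw [h, h2])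
    have hx3 : x ≠ b := fun h => hc2 (by rw [h, hfb, Set.pair_comm])
    have hx4 : x ≠ b + 1 := fun h => hc1 (by rw [h, hfb1, Set.pair_comm])
    exact core x hx1 hx2 hx3 hx4
  · have hset : {d : Set (ZMod (2 * n)) | ∃ x, d = {x, f x} ∧ Linked f a x} =
        {d : Set (ZMod (2 * n)) | ∃ x, d = {x, f x} ∧ Linked f (a + 1) x} := by
      ext d
      simp only [Set.mem_setOf_eq]
      constructor
      · rintro ⟨x, rfl, hL⟩
        refine ⟨x, rfl, ?_⟩
        by_cases hx1 : x = a; · exact absurd hL (none x (Or.inl hx1)).1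
        by_cases hx2 : x = a + 1; · exact absurd hL (none x (Or.inr (Or.inl hx2))).1
        by_cases hx3 : x = b; · exact absurd hL (none x (Or.inr (Or.inr (Or.inl hx3)))).1
        by_cases hx4 : x = b + 1; · exact absurd hL (none x (Or.inr (Or.inr (Or.inr hx4)))).1
        exact (core x hx1 hx2 hx3 hx4).1 hL
      · rintro ⟨x, rfl, hL⟩
        refine ⟨x, rfl, ?_⟩
        by_cases hx1 : x = a; · exact absurd hL (none x (Or.inl hx1)).2
        by_cases hx2 : x = a + 1; · exact absurd hL (none x (Or.inr (Or.inl hx2))).2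
        by_cases hx3 : x = b; · exact absurd hL (none x (Or.inr (Or.inr (Or.inl hx3)))).2
        by_cases hx4 : x = b + 1; · exact absurd hL (none x (Or.inr (Or.inr (Or.inr hx4)))).2
        exact (core x hx1 hx2 hx3 hx4).2 hL
    unfold GaussEven linkedCount
    rw [hset]
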